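/- Let H = ⋃_{λ∈Λ} H_λ be a locally Hilbert space arising from a strictly inductive system of Hilbert spaces (H_λ). Then for each λ ∈ Λ there exists a unique Hermitian projection P_λ : H → H with range H_λ; in particular H = H_λ ⊕ H_λ^⊥. -/

import Mathlib

local notation "⟪" x ", " y "⟫" => @inner ℂ _ _ x y

/-- Let `H = ⋃ H_λ` be a locally Hilbert space arising from a strictly inductive
system of Hilbert spaces (each `H_λ` a complete subspace, increasing along the directed set,
covering `H`). Then for each `λ` there is a unique Hermitian projection of `H` onto `H_λ`;
in particular `H = H_λ ⊕ H_λ^⊥`. -/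
theorem locallyHilbert_hermitian_projection
    {Λ H : Type*} [Preorder Λ] [Nonempty Λ]
    [NormedAddCommGroup H] [InnerProductSpace ℂ H]
    (hdir : ∀ a b : Λ, ∃ c, a ≤ c ∧ b ≤ c)
    (Hs : Λ → Submodule ℂ H)
    (hmono : ∀ {a b : Λ}, a ≤ b → Hs a ≤ Hs b)
    (hcover : ∀ h : H, ∃ l, h ∈ Hs l)
    (hcomplete : ∀ l, IsComplete (Hs l : Set H)) :
    ∀ l : Λ,
      (∃! P : H →ₗ[ℂ] H, (∀ h, P (P h) = P h) ∧
          (∀ h k : H, ⟪P h, k⟫ = ⟪h, P k⟫) ∧ LinearMap.range P = Hs l) ∧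
      (∀ h : H, ∃ s ∈ Hs l, ∃ t : H, (∀ u ∈ Hs l, ⟪u, t⟫ = 0) ∧ h = s + t) := by
  intro l
  haveI : CompleteSpace (Hs l) := (completeSpace_coe_iff_isComplete).2 (hcomplete l)
  set K := Hs l with hK
  let P : H →ₗ[ℂ] H := K.subtype ∘ₗ K.orthogonalProjectionOnto.toLinearMap
  have hPmem : ∀ h : H, P h ∈ K := fun h => (K.orthogonalProjectionOnto h).2
  have hPfix : ∀ h ∈ K, P h = h := fun h hh => by
    exact Submodule.starProjection_eq_self_iff.2 hh
  have hidem : ∀ h, P (P h) = P h := fun h => hPfix _ (hPmem h)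
  have hherm : ∀ h k : H, ⟪P h, k⟫ = ⟪h, P k⟫ := fun h k => by
    exact Submodule.inner_starProjection_left_eq_right (K := K) h k
  have hrange : LinearMap.range P = K := by
    apply le_antisymm
    · rintro _ ⟨h, rfl⟩; exact hPmem h
    · intro u hu; exact ⟨u, hPfix u hu⟩
  have horth : ∀ h : H, ∀ u ∈ K, ⟪u, h - P h⟫ = 0 := fun h u hu => by
    have := Submodule.sub_starProjection_mem_orthogonal (K := K) h
    exact this u hu
  constructor
  · refine ⟨P, ⟨hidem, hherm, hrange⟩, ?_⟩
    rintro Q ⟨hQidem, hQherm, hQrange⟩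
    ext h
    -- Q h ∈ K and h - Q h ⊥ K, same for P; use uniqueness of orthogonal decomposition
    have hQmem : ∀ x, Q x ∈ K := fun x => hQrange ▸ ⟨x, rfl⟩
    have hQorth : ∀ u ∈ K, ⟪u, h - Q h⟫ = 0 := by
      intro u hu
      obtain ⟨v, rfl⟩ := hQrange.ge hu
      rw [inner_sub_right, hQherm, hQherm, hQidem, sub_self]
    have hd : Q h - P h ∈ K := K.sub_mem (hQmem h) (hPmem h)
    have : ⟪Q h - P h, Q h - P h⟫ = 0 := by
      have h1 := hQorth _ hd
      have h2 := horth h _ hd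
      have : ⟪Q h - P h, h - Q h⟫ - ⟪Q h - P h, h - P h⟫ = 0 := by
        rw [h1, h2, sub_zero]
      calc ⟪Q h - P h, Q h - P h⟫
          = ⟪Q h - P h, h - P h⟫ - ⟪Q h - P h, h - Q h⟫ := by
            rw [← inner_sub_right]; congr 1; abel
        _ = 0 := by rw [h1, h2, sub_zero]
    have := inner_self_eq_zero.1 this
    have := sub_eq_zero.1 this
    exact this
  · intro h
    exact ⟨P h, hPmem h, h - P h, horth h, by abel⟩
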